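/- Let N be a 3-prime zero-symmetric left near-ring and d a nonzero multiplicative derivation of N such that [d(x), y] ∈ Z for all x, y ∈ N, where Z is the multiplicative center. Then N is a commutative ring. -/
import Mathlib


class LeftNearRing (N : Type*) extends AddGroup N, Mul N where
  mul_assoc : ∀ a b c : N, a * b * c = a * (b * c)
  left_distrib : ∀ a b c : N, a * (b + c) = a * b + a * c

theorem stmt10 {N : Type*} [LeftNearRing N]
    (hzs : ∀ x : N, 0 * x = 0)
    (hp : ∀ a b : N, (∀ n : N, a * n * b = 0) → a = 0 ∨ b = 0)
    (d : N → N) (hd : ∀ x y : N, d (x * y) = x * d y + d x * y)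
    (hd0 : ∃ x : N, d x ≠ 0)
    (hc : ∀ x y u : N, (d x * y - y * d x) * u = u * (d x * y - y * d x)) :
    (∀ x y : N, x * y = y * x) ∧ (∀ x y : N, x + y = y + x) := by
  classical
  obtain ⟨c, hdc⟩ := hd0
  have ma : ∀ a b c : N, a * b * c = a * (b * c) := LeftNearRing.mul_assoc
  have ld : ∀ a b c : N, a * (b + c) = a * b + a * c := LeftNearRing.left_distrib
  have mz : ∀ a : N, a * 0 = 0 := by
    intro a
    have h := ld a 0 0
    rw [add_zero] at h
    exact add_eq_left.mp h.symm
  have mneg : ∀ a b : N, a * (-b) = -(a * b) := by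
    intro a b
    have h : a * b + a * (-b) = 0 := by rw [← ld, add_neg_cancel, mz]
    exact (neg_eq_of_add_eq_zero_right h).symm
  have msub : ∀ a b c : N, a * (b - c) = a * b - a * c := by
    intro a b c
    rw [sub_eq_add_neg, ld, mneg, ← sub_eq_add_neg]
  have ann : ∀ z w : N, (∀ n, z * n = n * z) → z * w = 0 → z = 0 ∨ w = 0 := by
    intro z w hz h
    refine hp z w fun n => ?_
    rw [hz n, ma, h, mz]
  have annR : ∀ w z : N, (∀ n, z * n = n * z) → w * z = 0 → w = 0 ∨ z = 0 := by
    intro w z hz h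
    refine hp w z fun n => ?_
    rw [ma, ← hz n, ← ma, h, hzs]
  have csub : ∀ z : N, (∀ n, z * n = n * z) → ∀ a b : N, (a - b) * z = a * z - b * z := by
    intro z hz a b
    rw [← hz, msub, hz, hz]
  -- all values of d are central
  have dC : ∀ x n : N, d x * n = n * d x := by
    intro x n
    have hft : ∀ u, (d x * n - n * d x) * u = u * (d x * n - n * d x) := hc x n
    have key : (d x * n - n * d x) * (d x * n - n * d x) = 0 := by
      have hfa : d x * (d x * n) - (d x * n) * d x = d x * (d x * n - n * d x) := by
        rw [msub, ma]
      have he : ∀ u, (d x * (d x * n - n * d x)) * u = u * (d x * (d x * n - n * d x)) := by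
        intro u; rw [← hfa]; exact hc x (d x * n) u
      have h1 : (d x * n) * (d x * n - n * d x) = (n * d x) * (d x * n - n * d x) := by
        calc (d x * n) * (d x * n - n * d x)
            = d x * (n * (d x * n - n * d x)) := ma _ _ _
          _ = d x * ((d x * n - n * d x) * n) := by rw [hft n]
          _ = d x * (d x * n - n * d x) * n := (ma _ _ _).symm
          _ = n * (d x * (d x * n - n * d x)) := he n
          _ = (n * d x) * (d x * n - n * d x) := (ma _ _ _).symm
      rw [csub _ hft, h1, sub_self]
    rcases ann _ _ (hc x n) key with h | h <;> exact sub_eq_zero.mp h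
  -- partial distributivity
  have pd : ∀ x y w : N, (x * d y + d x * y) * w = x * (d y * w) + d x * (y * w) := by
    intro x y w
    have h1 := hd (x * y) w
    have h2 := hd x (y * w)
    rw [ma] at h1
    rw [h2, hd x y, hd y w, ld, ← ma x y (d w)] at h1
    rw [add_assoc] at h1
    exact (add_left_cancel h1).symm
  -- basic identity: for all a b n, (a*n)*d b + (b*n)*d a = (n*a)*d b + (n*b)*d a
  have BI : ∀ a b n : N, a * n * d b + b * n * d a = n * a * d b + n * b * d a := by
    intro a b n
    have h := dC (a * b) n
    rw [hd a b] at h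
    rw [pd, ld] at h
    rw [dC b n, ← ma a n (d b), dC a (b * n)] at h
    rw [← ma n a (d b), dC a b, ← ma n b (d a)] at h
    exact h
  have h6 : ∀ a n : N, (a * n - n * a) * d n = 0 := by
    intro a n
    have h := BI a n n
    have h' := add_right_cancel h
    rw [csub _ (dC n), h', sub_self]
  have h7 : ∀ n : N, d n = 0 → ∀ m : N, n * m = m * n := by
    intro n hn m
    have h := BI c n m
    rw [hn, mz, mz, zero_add, zero_add] at h
    have h2 : (n * m - m * n) * d c = 0 := by rw [csub _ (dC c), h, sub_self]
    rcases annR _ _ (dC c) h2 with h3 | h3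
    · exact sub_eq_zero.mp h3
    · exact absurd h3 hdc
  have mcomm : ∀ x y : N, x * y = y * x := by
    intro x y
    rcases annR _ _ (dC y) (h6 x y) with h | h
    · exact sub_eq_zero.mp h
    · exact (h7 y h x).symm
  have rd : ∀ a b u : N, (a + b) * u = a * u + b * u := by
    intro a b u
    rw [mcomm (a + b) u, ld, mcomm u a, mcomm u b]
  have pc : ∀ a b u v : N, a * v + b * u = b * u + a * v := by
    intro a b u v
    have h1 : (a + b) * (u + v) = a * u + a * v + (b * u + b * v) := by rw [rd, ld, ld]
    have h2 : (a + b) * (u + v) = a * u + b * u + (a * v + b * v) := by rw [ld, rd, rd]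
    have h := h1.symm.trans h2
    rw [add_assoc, add_assoc] at h
    have h' := add_left_cancel h
    rw [← add_assoc, ← add_assoc] at h'
    exact add_right_cancel h'
  have ab : ∀ x y : N, x + y = y + x := by
    intro x y
    have h : d c * (x + y - (y + x)) = 0 := by
      rw [msub, ld, ld, pc (d c) (d c) y x]
      exact sub_self _
    rcases ann _ _ (dC c) h with h2 | h2
    · exact absurd h2 hdc
    · exact sub_eq_zero.mp h2
  exact ⟨mcomm, ab⟩
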